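/- Let a = (a_{ij}) be a k×k integer matrix with det a ≠ 0, and let z, w ∈ ℂ^k. Let U ⊂ ℂ^k be a set of (det a)² points such that for each u ∈ U and each j, ∑_{i=1}^k u_i a_{ij} − z_j ∈ Λ, and the images of the points of U in (ℂ/Λ)^k are pairwise distinct; for u ∈ U define A_j(u), B_j(u) ∈ ℤ by ∑_i u_i a_{ij} − z_j = A_j(u)τ + B_j(u). Let V ⊂ ℂ^k be a set of (det a)² points such that for each v ∈ V and each i, ∑_{j=1}^k a_{ij} v_j − w_i ∈ Λ, and the images of the points of V in (ℂ/Λ)^k are pairwise distinct; for v ∈ V define C_i(v), D_i(v) ∈ ℤ by ∑_j a_{ij} v_j − w_i = C_i(v)τ + D_i(v). Then the (det a)² × (det a)² matrix M with entries M(u,v) = e^{2πi ∑_{i=1}^k (A_i(u)·v_i − C_i(v)·u_i)}, indexed by u ∈ U and v ∈ V, is nondegenerate (invertible). -/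

import Mathlib

open Complex Filter
open scoped Topology

noncomputable section

/-- The lattice `Λ = ℤτ + ℤ ⊂ ℂ` as a set. -/
def Lam (τ : ℂ) : Set ℂ := {c | ∃ l m : ℤ, c = l * τ + m}

/-- The infinite product `(y;q) = ∏_{j=0}^∞ (1 - y qʲ)`. -/
def qPoch (y q : ℂ) : ℂ := ∏' j : ℕ, (1 - y * q ^ j)

/-- The first Jacobi theta function
`θ(z,τ) = i e^{πi(τ/4 - z)} (x;q)(q/x;q)(q;q)`, `q = e^{2πiτ}`, `x = e^{2πiz}`. -/
def theta (z τ : ℂ) : ℂ :=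
  Complex.I * Complex.exp ((Real.pi : ℂ) * Complex.I * (τ / 4 - z)) *
    qPoch (Complex.exp (2 * (Real.pi : ℂ) * Complex.I * z))
      (Complex.exp (2 * (Real.pi : ℂ) * Complex.I * τ)) *
    qPoch (Complex.exp (2 * (Real.pi : ℂ) * Complex.I * τ) /
        Complex.exp (2 * (Real.pi : ℂ) * Complex.I * z))
      (Complex.exp (2 * (Real.pi : ℂ) * Complex.I * τ)) *
    qPoch (Complex.exp (2 * (Real.pi : ℂ) * Complex.I * τ))
      (Complex.exp (2 * (Real.pi : ℂ) * Complex.I * τ))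

/-- `θ'(z,τ)`, the derivative of `θ` in the `z` variable. -/
def thetaD (z τ : ℂ) : ℂ := deriv (fun u => theta u τ) z

/-- `σ_w(t,τ) = θ(w-t,τ)θ'(0,τ)/(θ(w,τ)θ(t,τ))`. -/
def sigmaW (w t τ : ℂ) : ℂ := theta (w - t) τ * thetaD 0 τ / (theta w τ * theta t τ)



-- ===== auxiliary development =====
open Matrix

lemma aux_generic (k : ℕ) (N : Submodule ℤ (Fin k → ℤ)) (e : (Fin k → ℤ) ≃ₗ[ℤ] N) :
    (LinearMap.det ((N.subtype).comp (e : (Fin k → ℤ) →ₗ[ℤ] N))).natAbs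
      = Nat.card ((Fin k → ℤ) ⧸ N) := by
  classical
  obtain ⟨n, snf⟩ := N.smithNormalForm (Pi.basisFun ℤ (Fin k))
  have hne : N.toAddSubgroup.index ≠ 0 :=
    Int.submodule_toAddSubgroup_index_ne_zero_iff.mpr ⟨e.symm⟩
  have hn : n = k := by
    have := snf.toAddSubgroup_index_ne_zero_iff.mp hne
    simpa using this
  subst hn
  -- now the ambient index type got renamed to `n`
  let σ : Fin n ≃ Fin n := Equiv.ofBijective snf.f
    ((Finite.injective_iff_bijective).mp snf.f.injective)
  have hσ : ∀ i, snf.f i = σ i := fun i => rfl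
  -- index computation
  have hidx : Nat.card ((Fin n → ℤ) ⧸ N) = ∏ i, (snf.a i).natAbs := by
    have h1 := snf.toAddSubgroup_index_eq_pow_mul_prod
    have : Nat.card ((Fin n → ℤ) ⧸ N) = N.toAddSubgroup.index := rfl
    rw [this, h1]
    simp [Ideal.span_singleton_toAddSubgroup_eq_zmultiples, Int.index_zmultiples]
  rw [hidx]
  -- determinant computation
  let e' : (Fin n → ℤ) ≃ₗ[ℤ] N := snf.bM.equiv snf.bN σ.symm
  have hassoc : Associated
      (LinearMap.det ((N.subtype).comp (e : (Fin n → ℤ) →ₗ[ℤ] N)))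
      (LinearMap.det ((N.subtype).comp (e' : (Fin n → ℤ) →ₗ[ℤ] N))) :=
    LinearMap.associated_det_comp_equiv _ _ _
  rw [Int.natAbs_eq_iff_associated.mpr hassoc]
  have hmat : LinearMap.toMatrix snf.bM snf.bM ((N.subtype).comp (e' : (Fin n → ℤ) →ₗ[ℤ] N))
      = Matrix.diagonal (snf.a ∘ σ.symm) := by
    ext i j
    rw [LinearMap.toMatrix_apply]
    have hfσ : snf.f (σ.symm j) = j := by
      have := σ.apply_symm_apply j
      rw [← hσ] at this; exact this
    have h2 : (e' (snf.bM j) : Fin n → ℤ) = snf.a (σ.symm j) • snf.bM j := by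
      simp only [e', Module.Basis.equiv_apply, snf.snf, hfσ]
    simp only [LinearMap.comp_apply, Submodule.subtype_apply, LinearEquiv.coe_coe]
    rw [h2, _root_.map_smul, Module.Basis.repr_self]
    simp only [Matrix.diagonal_apply, Finsupp.smul_apply, Finsupp.single_apply, smul_eq_mul]
    by_cases h : i = j
    · subst h; simp
    · simp only [if_neg h, if_neg (fun hh : j = i => h hh.symm)]
      simp [h]
  have : LinearMap.det ((N.subtype).comp (e' : (Fin n → ℤ) →ₗ[ℤ] N))
      = ∏ i, snf.a (σ.symm i) := by
    rw [← LinearMap.det_toMatrix snf.bM, hmat, Matrix.det_diagonal]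
    rfl
  rw [this]
  rw [show ((∏ i : Fin n, snf.a (σ.symm i)).natAbs)
      = ∏ i : Fin n, (snf.a (σ.symm i)).natAbs from
    map_prod Int.natAbsHom _ _]
  exact Fintype.prod_equiv σ.symm (fun i => (snf.a (σ.symm i)).natAbs)
    (fun i => (snf.a i).natAbs) fun i => rfl

lemma toLin'_int_injective (k : ℕ) (a : Matrix (Fin k) (Fin k) ℤ) (ha : a.det ≠ 0) :
    Function.Injective (Matrix.toLin' a) := by
  have haq : ((a.map (Int.cast : ℤ → ℚ)).det) ≠ 0 := by
    have : (a.map (Int.cast : ℤ → ℚ)).det = ((a.det : ℤ) : ℚ) :=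
      (RingHom.map_det (Int.castRingHom ℚ) a).symm
    rw [this]
    exact_mod_cast ha
  have hq : Function.Injective fun x : Fin k → ℚ => (a.map (Int.cast : ℤ → ℚ)).mulVec x := by
    intro x y hxy
    have hu : IsUnit (a.map (Int.cast : ℤ → ℚ)).det := haq.isUnit
    have := congrArg (fun t => ((a.map (Int.cast : ℤ → ℚ))⁻¹).mulVec t) hxy
    simpa [Matrix.mulVec_mulVec, Matrix.nonsing_inv_mul _ hu] using this
  intro x y hxy
  have hxy' : a.mulVec x = a.mulVec y := by
    simpa [Matrix.toLin'_apply] using hxy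
  have : (a.map (Int.cast : ℤ → ℚ)).mulVec (fun i => (x i : ℚ))
      = (a.map (Int.cast : ℤ → ℚ)).mulVec (fun i => (y i : ℚ)) := by
    funext j
    have := congrFun hxy' j
    simp only [Matrix.mulVec, dotProduct, Matrix.map_apply] at *
    exact_mod_cast this
  have := hq this
  funext i
  have := congrFun this i
  exact_mod_cast this

lemma natAbs_det_eq_card (k : ℕ) (a : Matrix (Fin k) (Fin k) ℤ) (ha : a.det ≠ 0) :
    Nat.card ((Fin k → ℤ) ⧸ LinearMap.range (Matrix.toLin' a)) = a.det.natAbs := by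
  have hinj := toLin'_int_injective k a ha
  let e : (Fin k → ℤ) ≃ₗ[ℤ] LinearMap.range (Matrix.toLin' a) :=
    LinearEquiv.ofInjective (Matrix.toLin' a) hinj
  have h := aux_generic k (LinearMap.range (Matrix.toLin' a)) e
  rw [← h]
  congr 1
  have : (LinearMap.range (Matrix.toLin' a)).subtype.comp
      (e : (Fin k → ℤ) →ₗ[ℤ] LinearMap.range (Matrix.toLin' a)) = Matrix.toLin' a := by
    ext x i
    rfl
  rw [this, LinearMap.det_toLin']


noncomputable section

variable {k : ℕ}

/-- rational inverse of an integer matrix -/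
def aQ (a : Matrix (Fin k) (Fin k) ℤ) : Matrix (Fin k) (Fin k) ℚ := (a.map Int.cast)⁻¹

def iq (x : Fin k → ℤ) : Fin k → ℚ := fun i => (x i : ℚ)

/-- the character value -/
def chi (a : Matrix (Fin k) (Fin k) ℤ) (x y : Fin k → ℤ) (γ δ : Fin k → ℤ) : ℂ :=
  Complex.exp (2 * (Real.pi : ℂ) * Complex.I *
    (((iq x ᵥ* aQ a) ⬝ᵥ iq δ - (iq y ᵥ* aQ a) ⬝ᵥ iq γ : ℚ) : ℂ))

lemma aQ_mul (a : Matrix (Fin k) (Fin k) ℤ) (ha : a.det ≠ 0) :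
    (a.map Int.cast) * aQ a = 1 := by
  apply Matrix.mul_nonsing_inv
  have : (a.map (Int.cast : ℤ → ℚ)).det = ((a.det : ℤ) : ℚ) :=
    (RingHom.map_det (Int.castRingHom ℚ) a).symm
  rw [this]
  exact_mod_cast (Int.cast_ne_zero.mpr ha : ((a.det : ℚ)) ≠ 0).isUnit

lemma mul_aQ (a : Matrix (Fin k) (Fin k) ℤ) (ha : a.det ≠ 0) :
    aQ a * (a.map Int.cast) = 1 := by
  apply Matrix.nonsing_inv_mul
  have : (a.map (Int.cast : ℤ → ℚ)).det = ((a.det : ℤ) : ℚ) :=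
    (RingHom.map_det (Int.castRingHom ℚ) a).symm
  rw [this]
  exact_mod_cast (Int.cast_ne_zero.mpr ha : ((a.det : ℚ)) ≠ 0).isUnit

lemma iq_mulVec (a : Matrix (Fin k) (Fin k) ℤ) (s : Fin k → ℤ) :
    iq (a.mulVec s) = (a.map Int.cast).mulVec (iq s) := by
  funext j
  simp only [iq, Matrix.mulVec, dotProduct, Matrix.map_apply]
  push_cast
  rfl

lemma chi_add (a : Matrix (Fin k) (Fin k) ℤ) (x y γ δ γ' δ' : Fin k → ℤ) :
    chi a x y (γ + γ') (δ + δ') = chi a x y γ δ * chi a x y γ' δ' := by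
  rw [chi, chi, chi, ← Complex.exp_add]
  congr 1
  have h1 : iq (γ + γ') = iq γ + iq γ' := by funext i; simp [iq]
  have h2 : iq (δ + δ') = iq δ + iq δ' := by funext i; simp [iq]
  rw [h1, h2, dotProduct_add, dotProduct_add]
  push_cast
  ring

lemma chi_add_shift (a : Matrix (Fin k) (Fin k) ℤ) (ha : a.det ≠ 0) (x y s t : Fin k → ℤ) :
    chi a x y (a.mulVec s) (a.mulVec t) = 1 := by
  rw [chi]
  have h1 : (iq x ᵥ* aQ a) ⬝ᵥ iq (a.mulVec t) = iq x ⬝ᵥ iq t := by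
    rw [iq_mulVec, dotProduct_mulVec, Matrix.vecMul_vecMul, mul_aQ a ha,
      Matrix.vecMul_one]
  have h2 : (iq y ᵥ* aQ a) ⬝ᵥ iq (a.mulVec s) = iq y ⬝ᵥ iq s := by
    rw [iq_mulVec, dotProduct_mulVec, Matrix.vecMul_vecMul, mul_aQ a ha,
      Matrix.vecMul_one]
  rw [h1, h2]
  have : ((iq x ⬝ᵥ iq t - iq y ⬝ᵥ iq s : ℚ) : ℂ) = ((x ⬝ᵥ t - y ⬝ᵥ s : ℤ) : ℂ) := by
    simp only [iq, dotProduct]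
    push_cast
    ring
  rw [this]
  have : 2 * (Real.pi : ℂ) * Complex.I * ((x ⬝ᵥ t - y ⬝ᵥ s : ℤ) : ℂ)
      = ((x ⬝ᵥ t - y ⬝ᵥ s : ℤ) : ℂ) * (2 * (Real.pi : ℂ) * Complex.I) := by ring
  rw [this, Complex.exp_int_mul_two_pi_mul_I]

lemma chi_congr (a : Matrix (Fin k) (Fin k) ℤ) (ha : a.det ≠ 0) (x y γ δ γ' δ' : Fin k → ℤ)
    (hγ : ∃ s, γ' - γ = a.mulVec s) (hδ : ∃ t, δ' - δ = a.mulVec t) :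
    chi a x y γ' δ' = chi a x y γ δ := by
  obtain ⟨s, hs⟩ := hγ
  obtain ⟨t, ht⟩ := hδ
  have : γ' = γ + a.mulVec s := by rw [← hs]; ring
  have h2 : δ' = δ + a.mulVec t := by rw [← ht]; ring
  rw [this, h2, chi_add, chi_add_shift a ha, mul_one]

end

noncomputable section
variable {k : ℕ}

lemma iq_vecMul (a : Matrix (Fin k) (Fin k) ℤ) (t : Fin k → ℤ) :
    iq (t ᵥ* a) = iq t ᵥ* (a.map Int.cast) := by
  funext j
  simp only [iq, Matrix.vecMul, dotProduct, Matrix.map_apply]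
  push_cast
  rfl

lemma noninteger_coord (a : Matrix (Fin k) (Fin k) ℤ) (ha : a.det ≠ 0) (x : Fin k → ℤ)
    (h : ¬∃ t, x = t ᵥ* a) : ∃ j, ∀ n : ℤ, (iq x ᵥ* aQ a) j ≠ (n : ℚ) := by
  by_contra hc
  push_neg at hc
  choose t ht using hc
  apply h
  refine ⟨t, ?_⟩
  have hq : iq x ᵥ* aQ a = iq t := by funext j; rw [ht j]; rfl
  have : iq x = iq t ᵥ* (a.map Int.cast) := by
    calc iq x = iq x ᵥ* (1 : Matrix (Fin k) (Fin k) ℚ) := (Matrix.vecMul_one _).symm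
    _ = iq x ᵥ* (aQ a * a.map Int.cast) := by rw [mul_aQ a ha]
    _ = (iq x ᵥ* aQ a) ᵥ* (a.map Int.cast) := by rw [Matrix.vecMul_vecMul]
    _ = iq t ᵥ* (a.map Int.cast) := by rw [hq]
  rw [← iq_vecMul] at this
  funext i
  have h5 := congrFun this i
  simp only [iq] at h5
  exact_mod_cast h5

lemma rat_exp_ne_one {r : ℚ} (h : ∀ n : ℤ, r ≠ (n : ℚ)) :
    Complex.exp (2 * (Real.pi : ℂ) * Complex.I * (r : ℂ)) ≠ 1 := by
  intro hone
  obtain ⟨n, hn⟩ := Complex.exp_eq_one_iff.mp hone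
  apply h n
  have h2 : (2 * (Real.pi : ℂ) * Complex.I) ≠ 0 :=
    mul_ne_zero (mul_ne_zero two_ne_zero (Complex.ofReal_ne_zero.mpr Real.pi_ne_zero))
      Complex.I_ne_zero
  have h3 : (r : ℂ) = (n : ℂ) := by
    rw [show ((n : ℂ) * (2 * (Real.pi : ℂ) * Complex.I))
        = 2 * (Real.pi : ℂ) * Complex.I * (n : ℂ) from by ring] at hn
    exact mul_left_cancel₀ h2 hn
  exact_mod_cast h3

lemma chi_exists_ne_one (a : Matrix (Fin k) (Fin k) ℤ) (ha : a.det ≠ 0) (x y : Fin k → ℤ)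
    (hx : (¬∃ t, x = t ᵥ* a) ∨ (¬∃ t, y = t ᵥ* a)) :
    ∃ γ δ, chi a x y γ δ ≠ 1 := by
  rcases hx with h | h
  · obtain ⟨j, hj⟩ := noninteger_coord a ha x h
    refine ⟨0, Pi.single j 1, ?_⟩
    rw [chi]
    have h0 : iq (0 : Fin k → ℤ) = 0 := by funext i; simp [iq]
    have h1 : iq (Pi.single j 1 : Fin k → ℤ) = Pi.single j 1 := by
      funext i
      simp only [iq, Pi.single_apply]
      split_ifs <;> simp
    rw [h0, h1, dotProduct_zero, sub_zero]
    have : (iq x ᵥ* aQ a) ⬝ᵥ Pi.single j 1 = (iq x ᵥ* aQ a) j := by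
      simp [dotProduct, Pi.single_apply]
    rw [this]
    exact rat_exp_ne_one hj
  · obtain ⟨j, hj⟩ := noninteger_coord a ha y h
    refine ⟨Pi.single j 1, 0, ?_⟩
    rw [chi]
    have h0 : iq (0 : Fin k → ℤ) = 0 := by funext i; simp [iq]
    have h1 : iq (Pi.single j 1 : Fin k → ℤ) = Pi.single j 1 := by
      funext i
      simp only [iq, Pi.single_apply]
      split_ifs <;> simp
    rw [h0, h1, dotProduct_zero, zero_sub]
    have : (iq y ᵥ* aQ a) ⬝ᵥ Pi.single j 1 = (iq y ᵥ* aQ a) j := by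
      simp [dotProduct, Pi.single_apply]
    rw [this]
    exact rat_exp_ne_one (fun n hn => hj (-n) (by push_cast; linarith))
end

noncomputable section
variable {k : ℕ}


lemma chi_sum_eq_zero (a : Matrix (Fin k) (Fin k) ℤ) (ha : a.det ≠ 0)
    (C D : Fin (a.det.natAbs ^ 2) → Fin k → ℤ)
    (hinj : ∀ p q : Fin (a.det.natAbs ^ 2),
      (∃ s, C p - C q = a.mulVec s) → (∃ t, D p - D q = a.mulVec t) → p = q)
    (x y : Fin k → ℤ)
    (hx : (¬∃ t, x = t ᵥ* a) ∨ (¬∃ t, y = t ᵥ* a)) :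
    ∑ q, chi a x y (C q) (D q) = 0 := by
  classical
  set N := LinearMap.range (Matrix.toLin' a) with hN
  have hmem : ∀ v : Fin k → ℤ, v ∈ N ↔ ∃ s, v = a.mulVec s := by
    intro v
    constructor
    · rintro ⟨s, rfl⟩; exact ⟨s, (Matrix.toLin'_apply a s).symm⟩
    · rintro ⟨s, rfl⟩; exact ⟨s, Matrix.toLin'_apply a s⟩
  have hcard : Nat.card ((Fin k → ℤ) ⧸ N) = a.det.natAbs := natAbs_det_eq_card k a ha
  have hfin : Finite ((Fin k → ℤ) ⧸ N) := by
    have : Nat.card ((Fin k → ℤ) ⧸ N) ≠ 0 := by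
      rw [hcard]; exact Int.natAbs_ne_zero.mpr ha
    exact (Nat.card_ne_zero.mp this).2
  set H := ((Fin k → ℤ) ⧸ N) × ((Fin k → ℤ) ⧸ N) with hH
  have hfinH : Finite H := by infer_instance
  let Φ : Fin (a.det.natAbs ^ 2) → H := fun q =>
    (Submodule.Quotient.mk (C q), Submodule.Quotient.mk (D q))
  have hΦinj : Function.Injective Φ := by
    intro p q hpq
    have h1 : (Submodule.Quotient.mk (C p) : (Fin k → ℤ) ⧸ N) = Submodule.Quotient.mk (C q) :=
      congrArg Prod.fst hpq
    have h2 : (Submodule.Quotient.mk (D p) : (Fin k → ℤ) ⧸ N) = Submodule.Quotient.mk (D q) :=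
      congrArg Prod.snd hpq
    exact hinj p q ((hmem _).mp ((Submodule.Quotient.eq N).mp h1))
      ((hmem _).mp ((Submodule.Quotient.eq N).mp h2))
  have hcardH : Nat.card H = a.det.natAbs ^ 2 := by
    rw [hH, Nat.card_prod, hcard]; ring
  haveI : Fintype H := Fintype.ofFinite H
  have hΦbij : Function.Bijective Φ := by
    rw [Fintype.bijective_iff_injective_and_card]
    refine ⟨hΦinj, ?_⟩
    rw [← Nat.card_eq_fintype_card, ← Nat.card_eq_fintype_card, hcardH, Nat.card_eq_fintype_card,
      Fintype.card_fin]
  let E : Fin (a.det.natAbs ^ 2) ≃ H := Equiv.ofBijective Φ hΦbij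
  obtain ⟨γ0, δ0, hne⟩ := chi_exists_ne_one a ha x y hx
  let sh : H := (Submodule.Quotient.mk γ0, Submodule.Quotient.mk δ0)
  let π : Fin (a.det.natAbs ^ 2) ≃ Fin (a.det.natAbs ^ 2) :=
    E.trans ((Equiv.addRight sh).trans E.symm)
  have hπ : ∀ q, Φ (π q) = Φ q + sh := by
    intro q
    have : Φ (π q) = E (π q) := rfl
    rw [this]
    show E (E.symm (E q + sh)) = Φ q + sh
    rw [E.apply_symm_apply]
    rfl
  have hval : ∀ q, chi a x y (C (π q)) (D (π q)) = chi a x y (C q + γ0) (D q + δ0) := by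
    intro q
    have h := hπ q
    have h1 : (Submodule.Quotient.mk (C (π q)) : (Fin k → ℤ) ⧸ N)
        = Submodule.Quotient.mk (C q + γ0) := congrArg Prod.fst h
    have h2 : (Submodule.Quotient.mk (D (π q)) : (Fin k → ℤ) ⧸ N)
        = Submodule.Quotient.mk (D q + δ0) := congrArg Prod.snd h
    exact chi_congr a ha x y _ _ _ _
      ((hmem _).mp ((Submodule.Quotient.eq N).mp h1))
      ((hmem _).mp ((Submodule.Quotient.eq N).mp h2))
  set S := ∑ q, chi a x y (C q) (D q) with hS
  have hstep : chi a x y γ0 δ0 * S = S := by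
    rw [hS, Finset.mul_sum]
    have : ∀ q ∈ Finset.univ, chi a x y γ0 δ0 * chi a x y (C q) (D q)
        = chi a x y (C (π q)) (D (π q)) := by
      intro q _
      rw [hval q, chi_add]
      ring
    rw [Finset.sum_congr rfl this]
    exact Equiv.sum_comp π fun q => chi a x y (C q) (D q)
  have : (chi a x y γ0 δ0 - 1) * S = 0 := by rw [sub_mul, hstep, one_mul, sub_self]
  rcases mul_eq_zero.mp this with h | h
  · exact absurd (sub_eq_zero.mp h) hne
  · exact h
end

noncomputable section
variable {k : ℕ}

lemma chi_zero (a : Matrix (Fin k) (Fin k) ℤ) (γ δ : Fin k → ℤ) :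
    chi a 0 0 γ δ = 1 := by
  rw [chi]
  have h0 : iq (0 : Fin k → ℤ) = 0 := by funext i; simp [iq]
  rw [h0, Matrix.zero_vecMul, zero_dotProduct, zero_dotProduct]
  simp

lemma chi_mul_conj (a : Matrix (Fin k) (Fin k) ℤ) (x x' y y' γ δ : Fin k → ℤ) :
    chi a x y γ δ * (starRingEnd ℂ) (chi a x' y' γ δ) = chi a (x - x') (y - y') γ δ := by
  rw [chi, chi, chi, ← Complex.exp_conj, ← Complex.exp_add]
  congr 1
  have hconj : (starRingEnd ℂ) (2 * (Real.pi : ℂ) * Complex.I *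
      (((iq x' ᵥ* aQ a) ⬝ᵥ iq δ - (iq y' ᵥ* aQ a) ⬝ᵥ iq γ : ℚ) : ℂ))
      = -(2 * (Real.pi : ℂ) * Complex.I *
      (((iq x' ᵥ* aQ a) ⬝ᵥ iq δ - (iq y' ᵥ* aQ a) ⬝ᵥ iq γ : ℚ) : ℂ)) := by
    rw [_root_.map_mul, _root_.map_mul, _root_.map_mul]
    rw [Complex.conj_I, map_ofNat, Complex.conj_ofReal, map_ratCast]
    ring
  rw [hconj]
  have hsub : ((iq (x - x') ᵥ* aQ a) ⬝ᵥ iq δ - (iq (y - y') ᵥ* aQ a) ⬝ᵥ iq γ : ℚ)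
      = ((iq x ᵥ* aQ a) ⬝ᵥ iq δ - (iq y ᵥ* aQ a) ⬝ᵥ iq γ)
        - ((iq x' ᵥ* aQ a) ⬝ᵥ iq δ - (iq y' ᵥ* aQ a) ⬝ᵥ iq γ) := by
    have hx : iq (x - x') = iq x - iq x' := by funext i; simp [iq]
    have hy : iq (y - y') = iq y - iq y' := by funext i; simp [iq]
    rw [hx, hy, Matrix.sub_vecMul, Matrix.sub_vecMul, sub_dotProduct,
      sub_dotProduct]
    ring
  rw [hsub]
  push_cast
  ring

lemma detK_ne_zero (a : Matrix (Fin k) (Fin k) ℤ) (ha : a.det ≠ 0)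
    (A B C D : Fin (a.det.natAbs ^ 2) → Fin k → ℤ)
    (hAB : ∀ p p' : Fin (a.det.natAbs ^ 2), p ≠ p' →
      ((¬∃ t, A p - A p' = t ᵥ* a) ∨ (¬∃ t, B p - B p' = t ᵥ* a)))
    (hCD : ∀ p q : Fin (a.det.natAbs ^ 2),
      (∃ s, C p - C q = a.mulVec s) → (∃ t, D p - D q = a.mulVec t) → p = q) :
    (Matrix.of fun p q : Fin (a.det.natAbs ^ 2) =>
      chi a (A p) (B p) (C q) (D q)).det ≠ 0 := by
  classical
  set K : Matrix (Fin (a.det.natAbs ^ 2)) (Fin (a.det.natAbs ^ 2)) ℂ :=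
    Matrix.of fun p q => chi a (A p) (B p) (C q) (D q) with hK
  have hKK : K * K.conjTranspose = ((a.det.natAbs ^ 2 : ℕ) : ℂ) • 1 := by
    ext p p'
    rw [Matrix.mul_apply]
    have hterm : ∀ q : Fin (a.det.natAbs ^ 2), K p q * K.conjTranspose q p'
        = chi a (A p - A p') (B p - B p') (C q) (D q) := by
      intro q
      rw [Matrix.conjTranspose_apply, hK]
      exact chi_mul_conj a _ _ _ _ _ _
    rw [Finset.sum_congr rfl fun q _ => hterm q]
    by_cases hpp : p = p'
    · subst hpp
      have : ∀ q, chi a (A p - A p) (B p - B p) (C q) (D q) = 1 := by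
        intro q
        rw [sub_self, sub_self, chi_zero]
      rw [Finset.sum_congr rfl fun q _ => this q]
      simp [Matrix.one_apply]
    · rw [chi_sum_eq_zero a ha C D hCD _ _ (hAB p p' hpp)]
      simp [Matrix.one_apply, hpp]
  intro hdet
  have h1 : (K * K.conjTranspose).det = 0 := by
    rw [Matrix.det_mul, hdet, zero_mul]
  rw [hKK] at h1
  have h2 : (((a.det.natAbs ^ 2 : ℕ) : ℂ) •
        (1 : Matrix (Fin (a.det.natAbs ^ 2)) (Fin (a.det.natAbs ^ 2)) ℂ)).det
      = ((a.det.natAbs ^ 2 : ℕ) : ℂ) ^ (a.det.natAbs ^ 2) := by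
    rw [Matrix.det_smul, Matrix.det_one, mul_one, Fintype.card_fin]
  rw [h2] at h1
  have hm0 : a.det.natAbs ^ 2 ≠ 0 := pow_ne_zero _ (Int.natAbs_ne_zero.mpr ha)
  exact (pow_ne_zero _ (Nat.cast_ne_zero.mpr hm0)) h1
end

-- ===== end auxiliary =====

/-- The matrix `M(u,v) = e^{2πi∑(Aᵢ(u)vᵢ - Cᵢ(v)uᵢ)}`, indexed by the `(det a)²` lifts `u`
of solutions of `∑ũᵢaᵢⱼ = z̃ⱼ` and the `(det a)²` lifts `v` of solutions of
`∑aᵢⱼṽⱼ = w̃ᵢ`, is nondegenerate. -/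
theorem M_matrix_nondegenerate (τ : ℂ) (hτ : 0 < τ.im)
    (k : ℕ) (a : Matrix (Fin k) (Fin k) ℤ) (ha : a.det ≠ 0)
    (z w : Fin k → ℂ)
    (u : Fin (a.det.natAbs ^ 2) → Fin k → ℂ)
    (A B : Fin (a.det.natAbs ^ 2) → Fin k → ℤ)
    (hu : ∀ p j, (∑ i, u p i * (a i j : ℂ)) - z j = (A p j : ℂ) * τ + (B p j : ℂ))
    (hudist : ∀ p q, (∀ i, u p i - u q i ∈ Lam τ) → p = q)
    (v : Fin (a.det.natAbs ^ 2) → Fin k → ℂ)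
    (C D : Fin (a.det.natAbs ^ 2) → Fin k → ℤ)
    (hv : ∀ q i, (∑ j, (a i j : ℂ) * v q j) - w i = (C q i : ℂ) * τ + (D q i : ℂ))
    (hvdist : ∀ p q, (∀ j, v p j - v q j ∈ Lam τ) → p = q) :
    (Matrix.of fun p q : Fin (a.det.natAbs ^ 2) =>
      Complex.exp (2 * (Real.pi : ℂ) * Complex.I *
        ∑ i, ((A p i : ℂ) * v q i - (C q i : ℂ) * u p i))).det ≠ 0 := by
  classical
  set aC : Matrix (Fin k) (Fin k) ℂ := a.map Int.cast with haC
  set aqC : Matrix (Fin k) (Fin k) ℂ := (aQ a).map Rat.cast with haqC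
  -- casting infrastructure
  have hmapmap : ∀ M : Matrix (Fin k) (Fin k) ℤ,
      (M.map (Int.cast : ℤ → ℚ)).map (Rat.cast : ℚ → ℂ) = M.map (Int.cast : ℤ → ℂ) := by
    intro M; funext i j; simp [Matrix.map_apply]
  have h1 : aC * aqC = 1 := by
    have h := congrArg (fun M => (Rat.castHom ℂ).mapMatrix M) (aQ_mul a ha)
    simp only [_root_.map_mul, _root_.map_one, RingHom.mapMatrix_apply] at h
    rw [haC, haqC]
    rw [show ((Rat.castHom ℂ) : ℚ → ℂ) = (Rat.cast : ℚ → ℂ) from rfl] at h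
    rw [← hmapmap a]
    exact h
  have h2 : aqC * aC = 1 := by
    have h := congrArg (fun M => (Rat.castHom ℂ).mapMatrix M) (mul_aQ a ha)
    simp only [_root_.map_mul, _root_.map_one, RingHom.mapMatrix_apply] at h
    rw [haC, haqC]
    rw [show ((Rat.castHom ℂ) : ℚ → ℂ) = (Rat.cast : ℚ → ℂ) from rfl] at h
    rw [← hmapmap a]
    exact h
  -- complex casts of integer vectors
  let ic : (Fin k → ℤ) → (Fin k → ℂ) := fun x i => (x i : ℂ)
  have hic_vecMul : ∀ t : Fin k → ℤ, ic (t ᵥ* a) = (ic t) ᵥ* aC := by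
    intro t; funext j
    simp only [ic, Matrix.vecMul, dotProduct, Matrix.map_apply, haC]
    push_cast
    rfl
  have hic_mulVec : ∀ s : Fin k → ℤ, ic (a.mulVec s) = aC.mulVec (ic s) := by
    intro s; funext j
    simp only [ic, Matrix.mulVec, dotProduct, Matrix.map_apply, haC]
    push_cast
    rfl
  have hcast : ∀ x y : Fin k → ℤ,
      (((iq x ᵥ* aQ a) ⬝ᵥ iq y : ℚ) : ℂ) = ((ic x) ᵥ* aqC) ⬝ᵥ (ic y) := by
    intro x y
    simp only [iq, ic, Matrix.vecMul, dotProduct, Matrix.map_apply, haqC]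
    push_cast
    rfl
  -- solve for u and v
  set zAB : Fin (a.det.natAbs ^ 2) → Fin k → ℂ :=
    fun p j => z j + (A p j : ℂ) * τ + (B p j : ℂ) with hzAB
  set wCD : Fin (a.det.natAbs ^ 2) → Fin k → ℂ :=
    fun q i => w i + (C q i : ℂ) * τ + (D q i : ℂ) with hwCD
  have hu' : ∀ p, (u p) ᵥ* aC = zAB p := by
    intro p; funext j
    have h := hu p j
    simp only [Matrix.vecMul, dotProduct, Matrix.map_apply, haC, hzAB]
    linear_combination h
  have hv' : ∀ q, aC.mulVec (v q) = wCD q := by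
    intro q; funext i
    have h := hv q i
    simp only [Matrix.mulVec, dotProduct, Matrix.map_apply, haC, hwCD]
    linear_combination h
  have hu2 : ∀ p, u p = (zAB p) ᵥ* aqC := by
    intro p
    calc u p = (u p) ᵥ* (1 : Matrix (Fin k) (Fin k) ℂ) := (Matrix.vecMul_one _).symm
    _ = (u p) ᵥ* (aC * aqC) := by rw [h1]
    _ = ((u p) ᵥ* aC) ᵥ* aqC := by rw [Matrix.vecMul_vecMul]
    _ = (zAB p) ᵥ* aqC := by rw [hu' p]
  have hv2 : ∀ q, v q = aqC.mulVec (wCD q) := by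
    intro q
    calc v q = (1 : Matrix (Fin k) (Fin k) ℂ).mulVec (v q) := (Matrix.one_mulVec _).symm
    _ = (aqC * aC).mulVec (v q) := by rw [h2]
    _ = aqC.mulVec (aC.mulVec (v q)) := by rw [← Matrix.mulVec_mulVec]
    _ = aqC.mulVec (wCD q) := by rw [hv' q]
  -- exponent splitting
  have hexp : ∀ p q, (∑ i, ((A p i : ℂ) * v q i - (C q i : ℂ) * u p i))
      = ((ic (A p)) ᵥ* aqC) ⬝ᵥ w - (z ᵥ* aqC) ⬝ᵥ (ic (C q))
        + (((ic (A p)) ᵥ* aqC) ⬝ᵥ (ic (D q)) - ((ic (B p)) ᵥ* aqC) ⬝ᵥ (ic (C q))) := by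
    intro p q
    have e1 : ∑ i, ((A p i : ℂ) * v q i - (C q i : ℂ) * u p i)
        = (ic (A p)) ⬝ᵥ (v q) - (ic (C q)) ⬝ᵥ (u p) := by
      rw [Finset.sum_sub_distrib]; rfl
    rw [e1, hu2 p, hv2 q]
    have hwCDsplit : wCD q = w + τ • (ic (C q)) + ic (D q) := by
      funext i; simp only [hwCD, ic, Pi.add_apply, Pi.smul_apply, smul_eq_mul]; ring
    have hzABsplit : zAB p = z + τ • (ic (A p)) + ic (B p) := by
      funext j; simp only [hzAB, ic, Pi.add_apply, Pi.smul_apply, smul_eq_mul]; ring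
    rw [hwCDsplit, hzABsplit]
    have t1 : (ic (A p)) ⬝ᵥ (aqC.mulVec (w + τ • ic (C q) + ic (D q)))
        = (ic (A p) ᵥ* aqC) ⬝ᵥ w + τ * ((ic (A p) ᵥ* aqC) ⬝ᵥ ic (C q))
          + (ic (A p) ᵥ* aqC) ⬝ᵥ ic (D q) := by
      rw [dotProduct_mulVec, dotProduct_add, dotProduct_add,
        dotProduct_smul]
      simp [smul_eq_mul]
    have t2 : (ic (C q)) ⬝ᵥ ((z + τ • ic (A p) + ic (B p)) ᵥ* aqC)
        = (z ᵥ* aqC) ⬝ᵥ ic (C q) + τ * ((ic (A p) ᵥ* aqC) ⬝ᵥ ic (C q))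
          + (ic (B p) ᵥ* aqC) ⬝ᵥ ic (C q) := by
      rw [dotProduct_comm, Matrix.add_vecMul, Matrix.add_vecMul, Matrix.smul_vecMul,
        add_dotProduct, add_dotProduct, smul_dotProduct]
      simp [smul_eq_mul]
    rw [t1, t2]
    ring
  -- hypotheses for the core matrix
  have hCD : ∀ p q : Fin (a.det.natAbs ^ 2),
      (∃ s, C p - C q = a.mulVec s) → (∃ t, D p - D q = a.mulVec t) → p = q := by
    rintro p q ⟨s, hs⟩ ⟨t, ht⟩
    apply hvdist p q
    intro j
    have hCc : ic (C p) - ic (C q) = aC.mulVec (ic s) := by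
      rw [← hic_mulVec, ← hs]; funext i
      simp only [ic, Pi.sub_apply]; push_cast; rfl
    have hDc : ic (D p) - ic (D q) = aC.mulVec (ic t) := by
      rw [← hic_mulVec, ← ht]; funext i
      simp only [ic, Pi.sub_apply]; push_cast; rfl
    have hwdiff : wCD p - wCD q = aC.mulVec (τ • ic s + ic t) := by
      rw [Matrix.mulVec_add, Matrix.mulVec_smul, ← hCc, ← hDc]
      funext i
      simp only [hwCD, Pi.sub_apply, Pi.add_apply, Pi.smul_apply, smul_eq_mul, ic]
      ring
    have hvdiff : v p - v q = τ • ic s + ic t := by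
      rw [hv2 p, hv2 q, ← Matrix.mulVec_sub, hwdiff, Matrix.mulVec_mulVec, h2,
        Matrix.one_mulVec]
    refine ⟨s j, t j, ?_⟩
    have := congrFun hvdiff j
    simp only [Pi.sub_apply, Pi.add_apply, Pi.smul_apply, smul_eq_mul, ic] at this
    rw [this]; ring
  have hAB : ∀ p p' : Fin (a.det.natAbs ^ 2), p ≠ p' →
      ((¬∃ t, A p - A p' = t ᵥ* a) ∨ (¬∃ t, B p - B p' = t ᵥ* a)) := by
    intro p p' hne
    by_contra hcon
    push_neg at hcon
    obtain ⟨⟨s, hs⟩, ⟨t, ht⟩⟩ := hcon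
    refine hne (hudist p p' ?_)
    intro i
    have hAc : ic (A p) - ic (A p') = (ic s) ᵥ* aC := by
      rw [← hic_vecMul, ← hs]; funext j
      simp only [ic, Pi.sub_apply]; push_cast; rfl
    have hBc : ic (B p) - ic (B p') = (ic t) ᵥ* aC := by
      rw [← hic_vecMul, ← ht]; funext j
      simp only [ic, Pi.sub_apply]; push_cast; rfl
    have hzdiff : zAB p - zAB p' = (τ • ic s + ic t) ᵥ* aC := by
      rw [Matrix.add_vecMul, Matrix.smul_vecMul, ← hAc, ← hBc]
      funext j
      simp only [hzAB, Pi.sub_apply, Pi.add_apply, Pi.smul_apply, smul_eq_mul, ic]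
      ring
    have hudiff : u p - u p' = τ • ic s + ic t := by
      rw [hu2 p, hu2 p', ← Matrix.sub_vecMul, hzdiff, Matrix.vecMul_vecMul, h1,
        Matrix.vecMul_one]
    refine ⟨s i, t i, ?_⟩
    have := congrFun hudiff i
    simp only [Pi.sub_apply, Pi.add_apply, Pi.smul_apply, smul_eq_mul, ic] at this
    rw [this]; ring
  -- factor the matrix
  set r : Fin (a.det.natAbs ^ 2) → ℂ :=
    fun p => Complex.exp (2 * (Real.pi : ℂ) * Complex.I * (((ic (A p)) ᵥ* aqC) ⬝ᵥ w)) with hr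
  set c : Fin (a.det.natAbs ^ 2) → ℂ :=
    fun q => Complex.exp (2 * (Real.pi : ℂ) * Complex.I * (-((z ᵥ* aqC) ⬝ᵥ (ic (C q)))))
    with hc
  have hM : (Matrix.of fun p q : Fin (a.det.natAbs ^ 2) =>
        Complex.exp (2 * (Real.pi : ℂ) * Complex.I *
          ∑ i, ((A p i : ℂ) * v q i - (C q i : ℂ) * u p i)))
      = Matrix.of fun p q : Fin (a.det.natAbs ^ 2) =>
          r p * (c q * chi a (A p) (B p) (C q) (D q)) := by
    ext p q
    simp only [Matrix.of_apply]
    rw [hexp p q, chi]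
    have hcore : (((iq (A p) ᵥ* aQ a) ⬝ᵥ iq (D q) - (iq (B p) ᵥ* aQ a) ⬝ᵥ iq (C q) : ℚ) : ℂ)
        = ((ic (A p)) ᵥ* aqC) ⬝ᵥ (ic (D q)) - ((ic (B p)) ᵥ* aqC) ⬝ᵥ (ic (C q)) := by
      push_cast
      rw [hcast, hcast]
    rw [hcore, hr, hc, ← Complex.exp_add, ← Complex.exp_add]
    congr 1
    ring
  rw [hM]
  have hd1 : (Matrix.of fun p q : Fin (a.det.natAbs ^ 2) =>
        r p * (c q * chi a (A p) (B p) (C q) (D q))).det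
      = (∏ p, r p) * (Matrix.of fun p q : Fin (a.det.natAbs ^ 2) =>
          c q * chi a (A p) (B p) (C q) (D q)).det :=
    Matrix.det_mul_column r _
  have hd2 : (Matrix.of fun p q : Fin (a.det.natAbs ^ 2) =>
        c q * chi a (A p) (B p) (C q) (D q)).det
      = (∏ q, c q) * (Matrix.of fun p q : Fin (a.det.natAbs ^ 2) =>
          chi a (A p) (B p) (C q) (D q)).det :=
    Matrix.det_mul_row c _
  rw [hd1, hd2]
  refine mul_ne_zero ?_ (mul_ne_zero ?_ (detK_ne_zero a ha A B C D hAB hCD))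
  · exact Finset.prod_ne_zero_iff.mpr fun p _ => Complex.exp_ne_zero _
  · exact Finset.prod_ne_zero_iff.mpr fun q _ => Complex.exp_ne_zero _
end
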